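/- Let G be a finite graph obtained from a graph G₀ by removing the two edges {v,x}, {v,y} and adding the edge {x,y}, where v, x, y ∈ V(G₀), x ≠ y, {x,y} ∉ E(G₀), d_{G₀}(v) ≤ 1/ρ, and d_{G₀}(x), d_{G₀}(y) ≤ 2/ρ with d_{G₀}(x), d_{G₀}(y) > 1/ρ. Let C be the connected component of G containing x and y. Then every contagious set A ⊆ V(C) for C with respect to ρ also infects V(C) in the original graph G₀. -/

import Mathlib

open Finset
open scoped Classical

variable {V : Type*}

/-- One step of the bootstrap percolation process in `G` with thresholds `φ`. -/
noncomputable def percStep [Fintype V] (G : SimpleGraph V) (φ : V → ℝ) (A : Finset V) :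
    Finset V :=
  A ∪ Finset.univ.filter fun v => φ v ≤ ((A.filter fun u => G.Adj v u).card : ℝ)

/-- `A` is a contagious set for `G` with respect to thresholds `φ`. -/
def Contagious [Fintype V] (G : SimpleGraph V) (φ : V → ℝ) (A : Finset V) : Prop :=
  ∃ k, (percStep G φ)^[k] A = Finset.univ

/-- The final infected set `H_{φ,G}(A)`. -/
noncomputable def percClosure [Fintype V] (G : SimpleGraph V) (φ : V → ℝ) (A : Finset V) :
    Finset V :=
  (percStep G φ)^[Fintype.card V] A

/-- `h_ρ(G)`: minimum size of a contagious set for ratio `ρ`. -/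
noncomputable def minContagious [Fintype V] (G : SimpleGraph V) (ρ : ℝ) : ℕ :=
  sInf {k | ∃ A : Finset V, A.card = k ∧ Contagious G (fun v => ρ * (G.degree v : ℝ)) A}

lemma subset_percStep [Fintype V] (G : SimpleGraph V) (φ : V → ℝ) (A : Finset V) :
    A ⊆ percStep G φ A := Finset.subset_union_left

lemma mem_percStep_of [Fintype V] (G : SimpleGraph V) (φ : V → ℝ) (X : Finset V) (z : V)
    (T : Finset V) (hTX : T ⊆ X) (hadj : ∀ t ∈ T, G.Adj z t) (hφ : φ z ≤ (T.card : ℝ)) :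
    z ∈ percStep G φ X := by
  have hsub : T ⊆ X.filter fun u => G.Adj z u := fun t ht =>
    Finset.mem_filter.mpr ⟨hTX ht, hadj t ht⟩
  refine Finset.mem_union_right _ (Finset.mem_filter.mpr ⟨Finset.mem_univ _, hφ.trans ?_⟩)
  exact_mod_cast Finset.card_le_card hsub

lemma subset_iterate_percStep [Fintype V] (G : SimpleGraph V) (φ : V → ℝ) (A : Finset V)
    (n : ℕ) : A ⊆ (percStep G φ)^[n] A := by
  induction n with
  | zero => simp
  | succ n ih =>
    rw [Function.iterate_succ_apply']
    exact ih.trans (subset_percStep G φ _)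

lemma iterate_percStep_subset_closure [Fintype V] (G : SimpleGraph V) (φ : V → ℝ)
    (A : Finset V) (k : ℕ) : (percStep G φ)^[k] A ⊆ percClosure G φ A := by
  set f := percStep G φ with hf
  set N := Fintype.card V with hN
  have hmono : ∀ m n : ℕ, m ≤ n → f^[m] A ⊆ f^[n] A := by
    intro m n h
    obtain ⟨j, rfl⟩ := Nat.exists_eq_add_of_le h
    rw [Nat.add_comm, Function.iterate_add_apply]
    exact subset_iterate_percStep G φ _ j
  have hfix : ∃ i ≤ N, f^[i+1] A = f^[i] A := by
    by_contra h
    push_neg at h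
    have hgrow : ∀ i, i ≤ N + 1 → i ≤ (f^[i] A).card := by
      intro i hi
      induction i with
      | zero => simp
      | succ i ih =>
        have h1 : f^[i] A ⊂ f^[i+1] A := by
          refine HasSubset.Subset.ssubset_of_ne ?_ ?_
          · rw [Function.iterate_succ_apply']; exact subset_percStep G φ _
          · exact fun he => h i (by omega) he.symm
        have h2 := Finset.card_lt_card h1
        have h3 := ih (by omega)
        omega
    have h1 := hgrow (N+1) le_rfl
    have h2 : (f^[N+1] A).card ≤ N := by
      simpa [hN] using Finset.card_le_univ (f^[N+1] A)
    omega
  obtain ⟨i, hiN, hfi⟩ := hfix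
  have hstab : ∀ j, f^[i+j] A = f^[i] A := by
    intro j
    induction j with
    | zero => rfl
    | succ j ih =>
      have : i + (j+1) = (i+j) + 1 := by omega
      rw [this, Function.iterate_succ_apply', ih]
      calc f (f^[i] A) = f^[i+1] A := (Function.iterate_succ_apply' f i A).symm
        _ = f^[i] A := hfi
  show f^[k] A ⊆ f^[N] A
  by_cases hk : k ≤ N
  · exact hmono k N hk
  · have h1 : f^[k] A = f^[i] A := by
      have hk' : k = i + (k - i) := by omega
      rw [hk', hstab]
    have h2 : f^[N] A = f^[i] A := by
      have hN' : N = i + (N - i) := by omega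
      rw [hN', hstab]
    rw [h1, h2]

set_option maxHeartbeats 1000000 in
/-- key step of Claim 2(ii): let `G` be obtained from `G₀` by deleting
the edges `{v,x}`, `{v,y}` and adding the edge `{x,y}`, where `d(v) ≤ 1/ρ` and
`1/ρ < d(x), d(y) ≤ 2/ρ`. If `C` is the component of `G` containing `x` and `y`,
then every contagious set `A ⊆ V(C)` for `C` also infects `V(C)` in `G₀`. -/
theorem edge_swap_contagious_transfer [Fintype V] (G₀ : SimpleGraph V) (ρ : ℝ)
    (hρ : ρ ∈ Set.Ioc (0 : ℝ) 1) (v x y : V) (hxy : x ≠ y)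
    (hvx : G₀.Adj v x) (hvy : G₀.Adj v y) (hnadj : ¬ G₀.Adj x y)
    (hdv : (G₀.degree v : ℝ) ≤ 1 / ρ)
    (hdx₁ : 1 / ρ < (G₀.degree x : ℝ)) (hdx₂ : (G₀.degree x : ℝ) ≤ 2 / ρ)
    (hdy₁ : 1 / ρ < (G₀.degree y : ℝ)) (hdy₂ : (G₀.degree y : ℝ) ≤ 2 / ρ)
    (G : SimpleGraph V)
    (hGdef : G = G₀.deleteEdges {s(v, x), s(v, y)} ⊔ SimpleGraph.fromEdgeSet {s(x, y)})
    (A : Finset ↥(G.connectedComponentMk x).supp)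
    (hA : Contagious (G.induce (G.connectedComponentMk x).supp)
      (fun w => ρ * ((G.induce (G.connectedComponentMk x).supp).degree w : ℝ)) A) :
    ∀ w ∈ (G.connectedComponentMk x).supp,
      w ∈ percClosure G₀ (fun z => ρ * (G₀.degree z : ℝ)) (A.image Subtype.val) := by
  obtain ⟨hρ0, hρ1⟩ := hρ
  have hvx' : v ≠ x := hvx.ne
  have hvy' : v ≠ y := hvy.ne
  have hG : ∀ a b, G.Adj a b ↔
      (G₀.Adj a b ∧ ¬(a = v ∧ b = x ∨ a = x ∧ b = v) ∧ ¬(a = v ∧ b = y ∨ a = y ∧ b = v)) ∨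
      ((a = x ∧ b = y ∨ a = y ∧ b = x) ∧ a ≠ b) := by
    subst hGdef
    intro a b
    simp [SimpleGraph.deleteEdges_adj, SimpleGraph.fromEdgeSet_adj, Sym2.eq_iff]
  have hxv : ¬ x = v := fun h => hvx' h.symm
  have hyv : ¬ y = v := fun h => hvy' h.symm
  -- adjacency transfer lemmas
  have hGv : ∀ b, G.Adj v b → G₀.Adj v b := by
    intro b h; rw [hG] at h
    rcases h with ⟨h, _, _⟩ | ⟨(⟨h, _⟩ | ⟨h, _⟩), _⟩
    · exact h
    · exact absurd h hvx'
    · exact absurd h hvy'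
  have hGx : ∀ b, G.Adj x b → b ≠ y → G₀.Adj x b := by
    intro b h hby; rw [hG] at h
    rcases h with ⟨h, _, _⟩ | ⟨(⟨_, h⟩ | ⟨h, _⟩), _⟩
    · exact h
    · exact absurd h hby
    · exact absurd h hxy
  have hGy : ∀ b, G.Adj y b → b ≠ x → G₀.Adj y b := by
    intro b h hbx; rw [hG] at h
    rcases h with ⟨h, _, _⟩ | ⟨(⟨h, _⟩ | ⟨_, h⟩), _⟩
    · exact h
    · exact absurd h (Ne.symm hxy)
    · exact absurd h hbx
  have hGother : ∀ a b, a ≠ v → a ≠ x → a ≠ y → (G.Adj a b ↔ G₀.Adj a b) := by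
    intro a b h1 h2 h3
    rw [hG]
    constructor
    · rintro (⟨h, _, _⟩ | ⟨(⟨h, _⟩ | ⟨h, _⟩), _⟩)
      · exact h
      · exact absurd h h2
      · exact absurd h h3
    · intro h
      refine Or.inl ⟨h, ?_, ?_⟩
      · rintro (⟨hh, _⟩ | ⟨hh, _⟩)
        · exact h1 hh
        · exact h2 hh
      · rintro (⟨hh, _⟩ | ⟨hh, _⟩)
        · exact h1 hh
        · exact h3 hh
  have hnGxv : ¬ G.Adj x v := by
    rw [hG]
    rintro (⟨_, h2, _⟩ | ⟨(⟨_, h⟩ | ⟨h, _⟩), _⟩)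
    · exact h2 (Or.inr ⟨rfl, rfl⟩)
    · exact hvy' h
    · exact hxy h
  have hnGyv : ¬ G.Adj y v := by
    rw [hG]
    rintro (⟨_, _, h3⟩ | ⟨(⟨h, _⟩ | ⟨_, h⟩), _⟩)
    · exact h3 (Or.inr ⟨rfl, rfl⟩)
    · exact hxy h.symm
    · exact hvx' h
  -- degree equalities
  have hNx : G.neighborFinset x = insert y ((G₀.neighborFinset x).erase v) := by
    have hyx : ¬ y = x := fun h => hxy h.symm
    ext b
    rw [SimpleGraph.mem_neighborFinset, hG]
    by_cases hby : b = y <;> by_cases hbv : b = v <;>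
      simp_all [Finset.mem_insert, Finset.mem_erase, SimpleGraph.mem_neighborFinset]
  have hNy : G.neighborFinset y = insert x ((G₀.neighborFinset y).erase v) := by
    ext b
    rw [SimpleGraph.mem_neighborFinset, hG]
    have hnadj' : ¬ G₀.Adj y x := fun h => hnadj h.symm
    have hyx : ¬ y = x := fun h => hxy h.symm
    by_cases hbx : b = x <;> by_cases hbv : b = v <;>
      simp_all [Finset.mem_insert, Finset.mem_erase, SimpleGraph.mem_neighborFinset]
  have hdx : G.degree x = G₀.degree x := by
    have hvmem : v ∈ G₀.neighborFinset x := by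
      rw [SimpleGraph.mem_neighborFinset]; exact hvx.symm
    have hynot : y ∉ (G₀.neighborFinset x).erase v := by
      simp only [Finset.mem_erase, SimpleGraph.mem_neighborFinset]
      exact fun h => hnadj h.2
    have hpos : 1 ≤ (G₀.neighborFinset x).card := Finset.card_pos.mpr ⟨v, hvmem⟩
    show (G.neighborFinset x).card = (G₀.neighborFinset x).card
    rw [hNx, Finset.card_insert_of_notMem hynot, Finset.card_erase_of_mem hvmem]
    omega
  have hdy : G.degree y = G₀.degree y := by
    have hvmem : v ∈ G₀.neighborFinset y := by
      rw [SimpleGraph.mem_neighborFinset]; exact hvy.symm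
    have hxnot : x ∉ (G₀.neighborFinset y).erase v := by
      simp only [Finset.mem_erase, SimpleGraph.mem_neighborFinset]
      exact fun h => hnadj h.2.symm
    have hpos : 1 ≤ (G₀.neighborFinset y).card := Finset.card_pos.mpr ⟨v, hvmem⟩
    show (G.neighborFinset y).card = (G₀.neighborFinset y).card
    rw [hNy, Finset.card_insert_of_notMem hxnot, Finset.card_erase_of_mem hvmem]
    omega
  have hdother : ∀ u, u ≠ v → u ≠ x → u ≠ y → G.degree u = G₀.degree u := by
    intro u h1 h2 h3
    have hN : G.neighborFinset u = G₀.neighborFinset u := by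
      ext b
      rw [SimpleGraph.mem_neighborFinset, SimpleGraph.mem_neighborFinset]
      exact hGother u b h1 h2 h3
    show (G.neighborFinset u).card = (G₀.neighborFinset u).card
    rw [hN]
  -- threshold bounds
  have hρdv : ρ * (G₀.degree v : ℝ) ≤ 1 := by
    have h := mul_le_mul_of_nonneg_left hdv hρ0.le
    rwa [mul_one_div, div_self hρ0.ne'] at h
  have hρdx1 : 1 < ρ * (G₀.degree x : ℝ) := by
    rw [mul_comm]; exact (div_lt_iff₀ hρ0).mp hdx₁
  have hρdx2 : ρ * (G₀.degree x : ℝ) ≤ 2 := by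
    rw [mul_comm]; exact (le_div_iff₀ hρ0).mp hdx₂
  have hρdy1 : 1 < ρ * (G₀.degree y : ℝ) := by
    rw [mul_comm]; exact (div_lt_iff₀ hρ0).mp hdy₁
  have hρdy2 : ρ * (G₀.degree y : ℝ) ≤ 2 := by
    rw [mul_comm]; exact (le_div_iff₀ hρ0).mp hdy₂
  -- component facts
  have hCadj : ∀ a b : ↥(G.connectedComponentMk x).supp,
      (G.induce (G.connectedComponentMk x).supp).Adj a b ↔ G.Adj a.val b.val := by
    intro a b; simp
  have hCdeg : ∀ w : ↥(G.connectedComponentMk x).supp,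
      ((G.induce (G.connectedComponentMk x).supp).degree w : ℕ) = G.degree w.val := by
    intro w
    have h1 : ∀ a ∈ (G.induce (G.connectedComponentMk x).supp).neighborFinset w,
        (a : V) ∈ G.neighborFinset w.val := by
      intro a ha
      rw [SimpleGraph.mem_neighborFinset] at ha ⊢
      simpa using ha
    have h2 : ∀ a ∈ (G.induce (G.connectedComponentMk x).supp).neighborFinset w,
        ∀ b ∈ (G.induce (G.connectedComponentMk x).supp).neighborFinset w,
        (a : V) = (b : V) → a = b := fun a _ b _ h => Subtype.ext h
    have h3 : ∀ b ∈ G.neighborFinset w.val,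
        ∃ a, ∃ ha : a ∈ (G.induce (G.connectedComponentMk x).supp).neighborFinset w,
          (a : V) = b := by
      intro b hb
      rw [SimpleGraph.mem_neighborFinset] at hb
      have hbS : b ∈ (G.connectedComponentMk x).supp := by
        rw [SimpleGraph.ConnectedComponent.mem_supp_iff] at *
        rw [← w.property]
        exact SimpleGraph.ConnectedComponent.connectedComponentMk_eq_of_adj hb.symm
      refine ⟨⟨b, hbS⟩, ?_, rfl⟩
      rw [SimpleGraph.mem_neighborFinset]
      simpa using hb
    exact Finset.card_bij (fun a _ => (a : V)) h1 h2 h3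
  set f0 := percStep G₀ (fun z => ρ * (G₀.degree z : ℝ)) with hf0
  set B := A.image Subtype.val with hB
  -- the key two-for-one step
  have hstep : ∀ (Y : Finset ↥(G.connectedComponentMk x).supp) (X : Finset V),
      Y.image Subtype.val ⊆ X →
      (percStep (G.induce (G.connectedComponentMk x).supp)
        (fun w => ρ * ((G.induce (G.connectedComponentMk x).supp).degree w : ℝ)) Y).image
        Subtype.val ⊆ f0 (f0 X) := by
    intro Y X hYX u hu
    obtain ⟨w, hwY, rfl⟩ := Finset.mem_image.mp hu
    have hXsub : X ⊆ f0 (f0 X) :=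
      (subset_percStep G₀ _ X).trans (subset_percStep G₀ _ (f0 X))
    rcases (@Finset.mem_union _ (fun a b => Classical.propDecidable (a = b)) _ _ _).mp hwY with hw | hw
    · exact hXsub (hYX (Finset.mem_image_of_mem _ hw))
    have hφ := (Finset.mem_filter.mp hw).2
    simp only [hCdeg] at hφ
    set F := Y.filter (fun u' => (G.induce (G.connectedComponentMk x).supp).Adj w u') with hF
    have hFadj : ∀ t ∈ F, G.Adj w.val t.val :=
      fun t ht => (hCadj w t).mp (Finset.mem_filter.mp ht).2
    have hFX : ∀ t ∈ F, (t : V) ∈ X :=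
      fun t ht => hYX (Finset.mem_image_of_mem _ (Finset.mem_filter.mp ht).1)
    by_cases huv : w.val = v
    · -- w = v : one infected G-neighbour suffices in G₀
      have hdpos : 0 < G.degree w.val := by
        rw [SimpleGraph.degree_pos_iff_exists_adj, huv]
        have hvS : v ∈ (G.connectedComponentMk x).supp := huv ▸ w.property
        rw [SimpleGraph.ConnectedComponent.mem_supp_iff, SimpleGraph.ConnectedComponent.eq]
          at hvS
        obtain ⟨p⟩ := hvS
        have hnil : ¬ p.Nil := fun h =>
          hvx' (SimpleGraph.Walk.eq_of_length_eq_zero (SimpleGraph.Walk.nil_iff_length_eq.mp h))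
        have hlen : 0 < p.length :=
          Nat.pos_of_ne_zero (fun h => hnil (SimpleGraph.Walk.nil_iff_length_eq.mpr h))
        exact ⟨_, by simpa using p.adj_getVert_succ (i := 0) hlen⟩
      have hpos : (0 : ℝ) < ρ * (G.degree w.val : ℝ) :=
        mul_pos hρ0 (by exact_mod_cast hdpos)
      have hFne : F.Nonempty := by
        rw [← Finset.card_pos]
        have h0 : (0 : ℝ) < (F.card : ℝ) := lt_of_lt_of_le hpos hφ
        exact_mod_cast h0
      obtain ⟨t, ht⟩ := hFne
      refine subset_percStep G₀ _ (f0 X) ?_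
      rw [huv]
      apply mem_percStep_of G₀ _ X v {(t : V)}
      · simp [hFX t ht]
      · intro s hs
        rw [Finset.mem_singleton] at hs
        subst hs
        exact hGv _ (by have h := hFadj t ht; rwa [huv] at h)
      · simpa using hρdv
    by_cases hux : w.val = x
    · -- w = x
      have h2 : 1 < F.card := by
        rw [hux, hdx] at hφ
        have h1 : (1 : ℝ) < (F.card : ℝ) := lt_of_lt_of_le hρdx1 hφ
        exact_mod_cast h1
      obtain ⟨t1, ht1, t2, ht2, hne⟩ := Finset.one_lt_card.mp h2
      have hvals : (t1 : V) ≠ (t2 : V) := fun h => hne (Subtype.ext h)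
      have ha1 : G.Adj x t1.val := by have h := hFadj t1 ht1; rwa [hux] at h
      have ha2 : G.Adj x t2.val := by have h := hFadj t2 ht2; rwa [hux] at h
      have hx1 : (t1 : V) ∈ X := hFX t1 ht1
      have hx2 : (t2 : V) ∈ X := hFX t2 ht2
      rw [hux]
      by_cases hcase : (t1 : V) = y ∨ (t2 : V) = y
      · have hkey : ∃ u' : V, u' ∈ X ∧ G₀.Adj x u' ∧ u' ≠ v ∧ y ∈ X := by
          rcases hcase with h | h
          · refine ⟨(t2 : V), hx2, hGx _ ha2 ?_, ?_, h ▸ hx1⟩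
            · exact fun hh => hvals (h.trans hh.symm)
            · exact fun hh => hnGxv (hh ▸ ha2)
          · refine ⟨(t1 : V), hx1, hGx _ ha1 ?_, ?_, h ▸ hx2⟩
            · exact fun hh => hvals (hh.trans h.symm)
            · exact fun hh => hnGxv (hh ▸ ha1)
        obtain ⟨u', hu'X, hu'adj, hu'v, hyX⟩ := hkey
        have hvf : v ∈ f0 X := by
          apply mem_percStep_of G₀ _ X v {y}
          · simp [hyX]
          · intro s hs
            rw [Finset.mem_singleton] at hs
            subst hs
            exact hvy
          · simpa using hρdv
        apply mem_percStep_of G₀ _ (f0 X) x {v, u'}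
        · intro s hs
          rcases Finset.mem_insert.mp hs with rfl | hs
          · exact hvf
          · rw [Finset.mem_singleton] at hs
            subst hs
            exact subset_percStep G₀ _ X hu'X
        · intro s hs
          rcases Finset.mem_insert.mp hs with rfl | hs
          · exact hvx.symm
          · rw [Finset.mem_singleton] at hs
            subst hs
            exact hu'adj
        · have hc : ({v, u'} : Finset V).card = 2 := by
            rw [Finset.card_insert_of_notMem (by simpa using Ne.symm hu'v),
              Finset.card_singleton]
          rw [hc]
          exact_mod_cast hρdx2
      · push_neg at hcase
        have hb1 : G₀.Adj x t1.val := hGx _ ha1 hcase.1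
        have hb2 : G₀.Adj x t2.val := hGx _ ha2 hcase.2
        refine subset_percStep G₀ _ (f0 X) ?_
        apply mem_percStep_of G₀ _ X x {(t1 : V), (t2 : V)}
        · intro s hs
          rcases Finset.mem_insert.mp hs with rfl | hs
          · exact hx1
          · rw [Finset.mem_singleton] at hs
            subst hs
            exact hx2
        · intro s hs
          rcases Finset.mem_insert.mp hs with rfl | hs
          · exact hb1
          · rw [Finset.mem_singleton] at hs
            subst hs
            exact hb2
        · have hc : ({(t1 : V), (t2 : V)} : Finset V).card = 2 := by
            rw [Finset.card_insert_of_notMem (by simpa using hvals), Finset.card_singleton]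
          rw [hc]
          exact_mod_cast hρdx2
    by_cases huy : w.val = y
    · -- w = y (symmetric)
      have h2 : 1 < F.card := by
        rw [huy, hdy] at hφ
        have h1 : (1 : ℝ) < (F.card : ℝ) := lt_of_lt_of_le hρdy1 hφ
        exact_mod_cast h1
      obtain ⟨t1, ht1, t2, ht2, hne⟩ := Finset.one_lt_card.mp h2
      have hvals : (t1 : V) ≠ (t2 : V) := fun h => hne (Subtype.ext h)
      have ha1 : G.Adj y t1.val := by have h := hFadj t1 ht1; rwa [huy] at h
      have ha2 : G.Adj y t2.val := by have h := hFadj t2 ht2; rwa [huy] at h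
      have hx1 : (t1 : V) ∈ X := hFX t1 ht1
      have hx2 : (t2 : V) ∈ X := hFX t2 ht2
      rw [huy]
      by_cases hcase : (t1 : V) = x ∨ (t2 : V) = x
      · have hkey : ∃ u' : V, u' ∈ X ∧ G₀.Adj y u' ∧ u' ≠ v ∧ x ∈ X := by
          rcases hcase with h | h
          · refine ⟨(t2 : V), hx2, hGy _ ha2 ?_, ?_, h ▸ hx1⟩
            · exact fun hh => hvals (h.trans hh.symm)
            · exact fun hh => hnGyv (hh ▸ ha2)
          · refine ⟨(t1 : V), hx1, hGy _ ha1 ?_, ?_, h ▸ hx2⟩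
            · exact fun hh => hvals (hh.trans h.symm)
            · exact fun hh => hnGyv (hh ▸ ha1)
        obtain ⟨u', hu'X, hu'adj, hu'v, hxX⟩ := hkey
        have hvf : v ∈ f0 X := by
          apply mem_percStep_of G₀ _ X v {x}
          · simp [hxX]
          · intro s hs
            rw [Finset.mem_singleton] at hs
            subst hs
            exact hvx
          · simpa using hρdv
        apply mem_percStep_of G₀ _ (f0 X) y {v, u'}
        · intro s hs
          rcases Finset.mem_insert.mp hs with rfl | hs
          · exact hvf
          · rw [Finset.mem_singleton] at hs
            subst hs
            exact subset_percStep G₀ _ X hu'X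
        · intro s hs
          rcases Finset.mem_insert.mp hs with rfl | hs
          · exact hvy.symm
          · rw [Finset.mem_singleton] at hs
            subst hs
            exact hu'adj
        · have hc : ({v, u'} : Finset V).card = 2 := by
            rw [Finset.card_insert_of_notMem (by simpa using Ne.symm hu'v),
              Finset.card_singleton]
          rw [hc]
          exact_mod_cast hρdy2
      · push_neg at hcase
        have hb1 : G₀.Adj y t1.val := hGy _ ha1 hcase.1
        have hb2 : G₀.Adj y t2.val := hGy _ ha2 hcase.2
        refine subset_percStep G₀ _ (f0 X) ?_
        apply mem_percStep_of G₀ _ X y {(t1 : V), (t2 : V)}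
        · intro s hs
          rcases Finset.mem_insert.mp hs with rfl | hs
          · exact hx1
          · rw [Finset.mem_singleton] at hs
            subst hs
            exact hx2
        · intro s hs
          rcases Finset.mem_insert.mp hs with rfl | hs
          · exact hb1
          · rw [Finset.mem_singleton] at hs
            subst hs
            exact hb2
        · have hc : ({(t1 : V), (t2 : V)} : Finset V).card = 2 := by
            rw [Finset.card_insert_of_notMem (by simpa using hvals), Finset.card_singleton]
          rw [hc]
          exact_mod_cast hρdy2
    · -- generic vertex
      refine subset_percStep G₀ _ (f0 X) ?_
      apply mem_percStep_of G₀ _ X w.val (F.image Subtype.val)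
      · intro s hs
        obtain ⟨t, ht, rfl⟩ := Finset.mem_image.mp hs
        exact hFX t ht
      · intro s hs
        obtain ⟨t, ht, rfl⟩ := Finset.mem_image.mp hs
        exact (hGother w.val t.val huv hux huy).mp (hFadj t ht)
      · rw [Finset.card_image_of_injective _ Subtype.val_injective]
        calc ρ * ((G₀.degree w.val : ℕ) : ℝ) = ρ * ((G.degree w.val : ℕ) : ℝ) := by
              rw [hdother w.val huv hux huy]
          _ ≤ (F.card : ℝ) := hφ
  -- main induction : Y_i ⊆ X_{2i}
  have hkey : ∀ i : ℕ,
      (((percStep (G.induce (G.connectedComponentMk x).supp)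
        (fun w => ρ * ((G.induce (G.connectedComponentMk x).supp).degree w : ℝ)))^[i] A).image
        Subtype.val) ⊆ f0^[2 * i] B := by
    intro i
    induction i with
    | zero => simp [hB]
    | succ i ih =>
      have h1 : 2 * (i + 1) = (2 * i) + 1 + 1 := by omega
      rw [Function.iterate_succ_apply', h1, Function.iterate_succ_apply',
        Function.iterate_succ_apply']
      exact hstep _ _ ih
  obtain ⟨k, hk⟩ := hA
  intro w hw
  have hwmem : w ∈ (((percStep (G.induce (G.connectedComponentMk x).supp)
      (fun w => ρ * ((G.induce (G.connectedComponentMk x).supp).degree w : ℝ)))^[k] A).image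
      Subtype.val) := by
    rw [hk]
    exact Finset.mem_image.mpr ⟨⟨w, hw⟩, Finset.mem_univ _, rfl⟩
  exact iterate_percStep_subset_closure G₀ _ B (2 * k) (hkey k hwmem)
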